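/- For every integer m ≥ 3, the labeling ℓ of the wreath graph W(m) defined by ℓ(x_i) = 2i+1 and ℓ(y_i) = -(2i+1) for i ∈ {0,1,...,m-1} is a distance magic labeling, and it is self-reverse. -/

import Mathlib

open Finset

/-- The label set `I_n = {1-n, 3-n, ..., n-1}`. -/
def ISet (n : ℕ) : Finset ℤ := (Finset.range n).image (fun i : ℕ => 2 * (i : ℤ) + 1 - n)

open scoped Classical in
/-- Sum of the labels over the neighborhood of `w`. -/
noncomputable def nbrSum {V : Type*} [Fintype V] (G : SimpleGraph V) (ℓ : V → ℤ) (w : V) : ℤ :=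
  ∑ x ∈ Finset.univ.filter (fun x => G.Adj w x), ℓ x

open scoped Classical in
/-- The degree of a vertex. -/
noncomputable def gdeg {V : Type*} [Fintype V] (G : SimpleGraph V) (w : V) : ℕ :=
  (Finset.univ.filter (fun x => G.Adj w x)).card

/-- A distance magic labeling: a bijection onto `I_n` with all neighborhood sums `0`. -/
def IsDML {V : Type*} [Fintype V] (G : SimpleGraph V) (ℓ : V → ℤ) : Prop :=
  Function.Injective ℓ ∧ (∀ x, ℓ x ∈ ISet (Fintype.card V)) ∧
    (∀ i ∈ ISet (Fintype.card V), ∃ x, ℓ x = i) ∧ ∀ w, nbrSum G ℓ w = 0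

/-- The wreath graph `W(m)`: vertices `(i, b)` with `b = false` for `x_i` and `b = true` for
`y_i`; each of `x_i, y_i` is adjacent to each of `x_{i±1}, y_{i±1}` (indices mod `m`). -/
def wreath (m : ℕ) : SimpleGraph (ZMod m × Bool) where
  Adj p q := p ≠ q ∧ (p.1 = q.1 + 1 ∨ q.1 = p.1 + 1)
  symm := ⟨fun p q h => ⟨h.1.symm, h.2.symm⟩⟩
  loopless := ⟨fun p h => h.1 rfl⟩

/-- The labeling `ℓ(x_i) = 2i+1`, `ℓ(y_i) = -(2i+1)` of the wreath graph `W(m)` (for `m ≥ 3`)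
is a distance magic labeling, and it is self-reverse (the pairing `v ↦ v^ℓ` swaps `x_i ↔ y_i`
and preserves adjacency). -/
theorem wreath_natural_labeling_selfReverse (m : ℕ) [NeZero m] (hm : 3 ≤ m)
    (ℓ : ZMod m × Bool → ℤ)
    (hl : ∀ p : ZMod m × Bool,
      ℓ p = if p.2 then -(2 * (p.1.val : ℤ) + 1) else 2 * (p.1.val : ℤ) + 1) :
    IsDML (wreath m) ℓ ∧ (∀ p : ZMod m × Bool, ℓ (p.1, !p.2) = -ℓ p) ∧
      ∀ p q : ZMod m × Bool,
        (wreath m).Adj p q ↔ (wreath m).Adj (p.1, !p.2) (q.1, !q.2) := by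
  haveI : Fact (1 < m) := ⟨by omega⟩
  have hfst : ∀ a b : ZMod m, (a = b + 1 ∨ b = a + 1) → a ≠ b := by
    rintro a b (h | h) he
    · rw [he] at h; exact one_ne_zero (α := ZMod m) (left_eq_add.mp h)
    · rw [he] at h; exact one_ne_zero (α := ZMod m) (left_eq_add.mp h)
  have hadj : ∀ p q : ZMod m × Bool,
      (wreath m).Adj p q ↔ (p.1 = q.1 + 1 ∨ q.1 = p.1 + 1) := by
    intro p q
    constructor
    · exact fun h => h.2
    · intro h
      exact ⟨fun he => hfst _ _ h (congrArg Prod.fst he), h⟩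
  have hcard : Fintype.card (ZMod m × Bool) = 2 * m := by
    simp [ZMod.card, Nat.mul_comm]
  refine ⟨⟨?_, ?_, ?_, ?_⟩, ?_, ?_⟩
  · -- injectivity
    rintro ⟨i, bi⟩ ⟨j, bj⟩ h
    rw [hl, hl] at h
    have hi := ZMod.val_lt i
    have hj := ZMod.val_lt j
    cases bi <;> cases bj <;> simp only [Bool.false_eq_true, if_true, if_false] at h
    · have : i = j := ZMod.val_injective m (by omega)
      simp [this]
    · omega
    · omega
    · have : i = j := ZMod.val_injective m (by omega)
      simp [this]
  · -- membership
    rintro ⟨i, b⟩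
    rw [hl, hcard]
    have hi := ZMod.val_lt i
    simp only [ISet, mem_image, mem_range]
    cases b
    · exact ⟨i.val + m, by omega, by push_cast; ring⟩
    · exact ⟨m - 1 - i.val, by omega, by simp only [if_true]; omega⟩
  · -- surjectivity
    intro k hk
    rw [hcard] at hk
    simp only [ISet, mem_image, mem_range] at hk
    obtain ⟨a, ha, rfl⟩ := hk
    by_cases h : a < m
    · refine ⟨(((m - 1 - a : ℕ) : ZMod m), true), ?_⟩
      rw [hl]
      simp only [if_true]
      rw [ZMod.val_cast_of_lt (by omega)]
      omega
    · refine ⟨(((a - m : ℕ) : ZMod m), false), ?_⟩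
      rw [hl]
      simp only [Bool.false_eq_true, if_false]
      rw [ZMod.val_cast_of_lt (by omega)]
      omega
  · -- nbrSum
    intro w
    unfold nbrSum
    refine Finset.sum_involution (fun x _ => (x.1, !x.2)) ?_ ?_ ?_ ?_
    · intro x _
      rw [hl x, hl (x.1, !x.2)]
      cases hb : x.2 <;> simp <;> ring
    · intro x _ _
      simp [Prod.ext_iff]
    · intro x hx
      simp only [mem_filter, mem_univ, true_and] at hx ⊢
      exact (hadj w _).mpr ((hadj w x).mp hx)
    · intro x _
      simp
  · -- labels negate
    rintro ⟨i, b⟩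
    rw [hl, hl]
    cases b <;> simp
  · -- adjacency preserved
    intro p q
    rw [hadj, hadj]
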